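/- For every countable ordinal α, the immediate consequence operator T_P is α-monotonic: if I ⊑_α J then T_P(I) ⊑_α T_P(J). -/

import Mathlib

open Ordinal Set

noncomputable section
attribute [local instance] Classical.propDecidable

namespace IVS

/-- Countable ordinals: ordinals below `ω₁`. -/
abbrev Ord1 := {o : Ordinal.{0} // o < ω₁}

theorem zero_lt_omega1 : (0 : Ordinal) < ω₁ := omega_pos 1

theorem succ_lt_omega1 {o : Ordinal} (h : o < ω₁) : o + 1 < ω₁ := by
  rw [← Order.succ_eq_add_one]
  exact (Cardinal.isSuccLimit_omega 1).succ_lt h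

/-- zero as a countable ordinal -/
def O0 : Ord1 := ⟨0, zero_lt_omega1⟩

/-- successor on countable ordinals -/
def Ord1.succ (a : Ord1) : Ord1 := ⟨a.1 + 1, succ_lt_omega1 a.2⟩

/-- The truth domain `V`: `F_α < ⋯ < 0 < ⋯ < T_α` realized as a lexicographic sum. -/
abbrev TV := Ord1 ⊕ₗ (Unit ⊕ₗ Ord1ᵒᵈ)

/-- the false value `F_α` -/
def TV.F (a : Ord1) : TV := toLex (Sum.inl a)
/-- the middle value `0` -/
def TV.Z : TV := toLex (Sum.inr (toLex (Sum.inl ())))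
/-- the true value `T_α` -/
def TV.T (a : Ord1) : TV := toLex (Sum.inr (toLex (Sum.inr (OrderDual.toDual a))))

/-- the order of a truth value (`⊤` codes `+∞`, the order of `0`) -/
def ordOf (v : TV) : WithTop Ordinal :=
  match ofLex v with
  | .inl a => (a.1 : Ordinal)
  | .inr b =>
    match ofLex b with
    | .inl _ => ⊤
    | .inr a => ((OrderDual.ofDual a).1 : Ordinal)

/-- negation-as-failure: `¬F_α = T_{α+1}`, `¬T_α = F_{α+1}`, `¬0 = 0`. -/
def negv (v : TV) : TV :=
  match ofLex v with
  | .inl a => TV.T a.succ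
  | .inr b =>
    match ofLex b with
    | .inl _ => TV.Z
    | .inr a => TV.F (OrderDual.ofDual a).succ

/-- Literals of a propositional normal program (atoms are natural numbers). -/
inductive Lit where
  | pos (n : ℕ)
  | neg (n : ℕ)
  | tt
  | ff

/-- A normal program clause: a head atom and a body which is a conjunction of literals. -/
structure Clause where
  head : ℕ
  body : List Lit

/-- A (possibly infinite) propositional normal logic program. -/
abbrev Program := Set Clause

/-- Infinite-valued interpretations. -/
abbrev Interp := ℕ → TV

/-- the interpretation assigning `F₀` to every atom (denoted `∅` in the paper) -/
def botI : Interp := fun _ => TV.F O0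

def evalLit (I : Interp) : Lit → TV
  | .pos n => I n
  | .neg n => negv (I n)
  | .tt => TV.T O0
  | .ff => TV.F O0

/-- value of a body (conjunction evaluated by `min`; empty conjunction is `T₀`) -/
def evalBody (I : Interp) (b : List Lit) : TV :=
  (b.map (evalLit I)).foldr min (TV.T O0)

/-- least upper bound in `V` (well-defined by the lub-existence theorem) -/
def lub (S : Set TV) : TV := if h : ∃ v, IsLUB S v then h.choose else TV.Z

/-- the immediate consequence operator -/
def TP (P : Program) (I : Interp) : Interp :=
  fun p => lub {v | ∃ c ∈ P, c.head = p ∧ evalBody I c.body = v}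

/-- `I` is an (infinite-valued) model of `P` -/
def isModel (P : Program) (I : Interp) : Prop :=
  ∀ c ∈ P, evalBody I c.body ≤ I c.head

/-- the level set `I ∥ v` -/
def level (I : Interp) (v : TV) : Set ℕ := {p | I p = v}

/-- `I =_α J` -/
def eqA (α : Ord1) (I J : Interp) : Prop :=
  ∀ β ≤ α, level I (TV.T β) = level J (TV.T β) ∧ level I (TV.F β) = level J (TV.F β)

/-- `I ⊏_α J` -/
def sqltA (α : Ord1) (I J : Interp) : Prop :=
  (∀ β < α, eqA β I J) ∧
    ((level I (TV.T α) ⊂ level J (TV.T α) ∧ level J (TV.F α) ⊆ level I (TV.F α)) ∨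
     (level I (TV.T α) ⊆ level J (TV.T α) ∧ level J (TV.F α) ⊂ level I (TV.F α)))

/-- `I ⊑_α J` -/
def sqleA (α : Ord1) (I J : Interp) : Prop := eqA α I J ∨ sqltA α I J

/-- `I ⊏_∞ J` -/
def sqltInf (I J : Interp) : Prop := ∃ α : Ord1, sqltA α I J

/-- `I ⊑_∞ J` -/
def sqleInf (I J : Interp) : Prop := I = J ∨ sqltInf I J

/-- the sequence `T_P^n(I)` is an `α`-chain -/
def isChainA (P : Program) (α : Ord1) (I : Interp) : Prop :=
  ∀ n : ℕ, sqleA α ((TP P)^[n] I) ((TP P)^[n + 1] I)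

/-- the interpretation `T_{P,α}^ω(I)` -/
def TPomega (P : Program) (α : Ord1) (I : Interp) : Interp := fun p =>
  if ordOf (I p) < (α.1 : WithTop Ordinal) then I p
  else if ∃ n : ℕ, (TP P)^[n] I p = TV.T α then TV.T α
  else if ∀ n : ℕ, (TP P)^[n] I p = TV.F α then TV.F α
  else TV.F α.succ

/-- `⊔_{β<α} M_β` for a family defined below `α` -/
def sqcupI (α : Ord1) (f : ∀ β : Ordinal, β < α.1 → Interp) : Interp := fun p =>
  if h : ∃ β : Ordinal, ∃ hb : β < α.1, ordOf (f β hb p) = (β : WithTop Ordinal)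
  then f h.choose h.choose_spec.choose p
  else TV.F α

/-- the approximations `M_α` to the minimum model (junk values for `α ≥ ω₁`) -/
def MA (P : Program) (o : Ordinal) : Interp :=
  Ordinal.limitRecOn o
    (TPomega P O0 botI)
    (fun o' ih => if h : o' + 1 < ω₁ then TPomega P ⟨o' + 1, h⟩ ih else ih)
    (fun o' _ ih =>
      if h : o' < ω₁ then TPomega P ⟨o', h⟩ (sqcupI ⟨o', h⟩ ih) else botI)

/-- `M_α` for a countable ordinal `α` -/
def Mα (P : Program) (α : Ord1) : Interp := MA P α.1

/-- the defining property of the depth `δ` of a program -/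
def isDepth (P : Program) (δ : Ord1) : Prop :=
  (level (Mα P δ) (TV.T δ) = ∅ ∧ level (Mα P δ) (TV.F δ) = ∅) ∧
    ∀ β : Ord1, β < δ →
      (level (Mα P β) (TV.T β) ≠ ∅ ∨ level (Mα P β) (TV.F β) ≠ ∅)

/-- the depth of a program -/
def depth (P : Program) : Ord1 :=
  if h : ∃ δ : Ord1, isDepth P δ then h.choose else O0

/-- the minimum model `M_P` -/
def MP (P : Program) : Interp := fun p =>
  if ordOf (Mα P (depth P) p) < ((depth P).1 : WithTop Ordinal)
  then Mα P (depth P) p else TV.Z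

/-- the set of all infinite-valued models of `P` -/
def models (P : Program) : Set Interp := {I | isModel P I}

/-- `M ♯ α`: the part of `M` consisting of values of order `α` -/
def sharp (I : Interp) (α : Ord1) : Set (ℕ × TV) :=
  {pv | I pv.1 = pv.2 ∧ ordOf pv.2 = (α.1 : WithTop Ordinal)}

/-- `⨀^α S = ⋀^α S ∪ ⋁^α S` -/
def odot (α : Ord1) (S : Set Interp) : Set (ℕ × TV) :=
  {pv | (∃ p : ℕ, pv = (p, TV.T α) ∧ ∀ M ∈ S, M p = TV.T α) ∨
        (∃ p : ℕ, pv = (p, TV.F α) ∧ ∃ M ∈ S, M p = TV.F α)}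

/-- the sets `S_α` of the model intersection construction (junk for `α ≥ ω₁`) -/
def SA (P : Program) (o : Ordinal) : Set Interp :=
  Ordinal.limitRecOn o
    {M ∈ models P | sharp M O0 = odot O0 (models P)}
    (fun o' ih =>
      if h : o' + 1 < ω₁ then {M ∈ ih | sharp M ⟨o' + 1, h⟩ = odot ⟨o' + 1, h⟩ ih} else ih)
    (fun o' _ ih =>
      if h : o' < ω₁ then
        {M : Interp | M ∈ (⋂ (b : Ordinal) (hb : b < o'), ih b hb) ∧
          sharp M ⟨o', h⟩ = odot ⟨o', h⟩ (⋂ (b : Ordinal) (hb : b < o'), ih b hb)}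
      else ∅)


/-! ### Auxiliary development for α-monotonicity -/

section AlphaMono

/-- case analysis on a truth value -/
lemma tv_cases (v : TV) : (∃ a, v = TV.F a) ∨ v = TV.Z ∨ ∃ a, v = TV.T a := by
  rcases h : ofLex v with a | b
  · exact Or.inl ⟨a, by rw [← toLex_ofLex v, h]; rfl⟩
  · rcases h2 : ofLex b with u | a
    · refine Or.inr (Or.inl ?_)
      rw [← toLex_ofLex v, h, ← toLex_ofLex b, h2]; rfl
    · exact Or.inr (Or.inr ⟨OrderDual.ofDual a, by
        rw [← toLex_ofLex v, h, ← toLex_ofLex b, h2]; rfl⟩)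

lemma F_lt_F {a b : Ord1} : TV.F a < TV.F b ↔ a < b := Sum.Lex.inl_lt_inl_iff
lemma F_le_F {a b : Ord1} : TV.F a ≤ TV.F b ↔ a ≤ b := Sum.Lex.inl_le_inl_iff
lemma F_lt_Z {a : Ord1} : TV.F a < TV.Z := Sum.Lex.inl_lt_inr _ _
lemma F_lt_T {a b : Ord1} : TV.F a < TV.T b := Sum.Lex.inl_lt_inr _ _
lemma Z_lt_T {b : Ord1} : TV.Z < TV.T b :=
  Sum.Lex.inr_lt_inr_iff.2 (Sum.Lex.inl_lt_inr _ _)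
lemma T_le_T {a b : Ord1} : TV.T a ≤ TV.T b ↔ b ≤ a := by
  show toLex (Sum.inr _) ≤ toLex (Sum.inr _) ↔ _
  rw [Sum.Lex.inr_le_inr_iff]
  show toLex (Sum.inr _) ≤ toLex (Sum.inr _) ↔ _
  rw [Sum.Lex.inr_le_inr_iff]
  exact OrderDual.toDual_le_toDual
lemma T_lt_T {a b : Ord1} : TV.T a < TV.T b ↔ b < a := by
  show toLex (Sum.inr _) < toLex (Sum.inr _) ↔ _
  rw [Sum.Lex.inr_lt_inr_iff]
  show toLex (Sum.inr _) < toLex (Sum.inr _) ↔ _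
  rw [Sum.Lex.inr_lt_inr_iff]
  exact OrderDual.toDual_lt_toDual
lemma not_Z_le_F {a : Ord1} : ¬ TV.Z ≤ TV.F a := Sum.Lex.not_inr_le_inl
lemma not_T_le_F {a b : Ord1} : ¬ TV.T a ≤ TV.F b := Sum.Lex.not_inr_le_inl
lemma not_T_le_Z {a : Ord1} : ¬ TV.T a ≤ TV.Z := not_le.2 Z_lt_T

lemma F_ne_Z {a : Ord1} : TV.F a ≠ TV.Z := ne_of_lt F_lt_Z
lemma F_ne_T {a b : Ord1} : TV.F a ≠ TV.T b := ne_of_lt F_lt_T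
lemma Z_ne_T {b : Ord1} : TV.Z ≠ TV.T b := ne_of_lt Z_lt_T
lemma T_ne_Z {b : Ord1} : TV.T b ≠ TV.Z := ne_of_gt Z_lt_T
lemma T_ne_F {a b : Ord1} : TV.T a ≠ TV.F b := ne_of_gt F_lt_T
lemma Z_ne_F {a : Ord1} : TV.Z ≠ TV.F a := ne_of_gt F_lt_Z

lemma F_inj {a b : Ord1} (h : TV.F a = TV.F b) : a = b :=
  le_antisymm (F_le_F.1 h.le) (F_le_F.1 h.ge)
lemma T_inj {a b : Ord1} (h : TV.T a = TV.T b) : a = b :=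
  le_antisymm (T_le_T.1 h.ge) (T_le_T.1 h.le)

lemma le_F {v : TV} {a : Ord1} (h : v ≤ TV.F a) : ∃ b, b ≤ a ∧ v = TV.F b := by
  rcases tv_cases v with ⟨b, rfl⟩ | rfl | ⟨b, rfl⟩
  · exact ⟨b, F_le_F.1 h, rfl⟩
  · exact absurd h not_Z_le_F
  · exact absurd h not_T_le_F

lemma lt_F {v : TV} {a : Ord1} (h : v < TV.F a) : ∃ b, b < a ∧ v = TV.F b := by
  obtain ⟨b, hb, rfl⟩ := le_F h.le
  exact ⟨b, F_lt_F.1 h, rfl⟩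

lemma T_le {v : TV} {a : Ord1} (h : TV.T a ≤ v) : ∃ b, b ≤ a ∧ v = TV.T b := by
  rcases tv_cases v with ⟨b, rfl⟩ | rfl | ⟨b, rfl⟩
  · exact absurd h not_T_le_F
  · exact absurd h not_T_le_Z
  · exact ⟨b, T_le_T.1 h, rfl⟩

lemma T_lt {v : TV} {a : Ord1} (h : TV.T a < v) : ∃ b, b < a ∧ v = TV.T b := by
  obtain ⟨b, hb, rfl⟩ := T_le h.le
  exact ⟨b, T_lt_T.1 h, rfl⟩

lemma ordOf_F (a : Ord1) : ordOf (TV.F a) = (a.1 : WithTop Ordinal) := rfl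
lemma ordOf_Z : ordOf TV.Z = ⊤ := rfl
lemma ordOf_T (a : Ord1) : ordOf (TV.T a) = (a.1 : WithTop Ordinal) := rfl

lemma negv_F (a : Ord1) : negv (TV.F a) = TV.T a.succ := rfl
lemma negv_Z : negv TV.Z = TV.Z := rfl
lemma negv_T (a : Ord1) : negv (TV.T a) = TV.F a.succ := rfl

lemma o_lt_o {a b : Ord1} : (a.1 : WithTop Ordinal) < (b.1 : WithTop Ordinal) ↔ a < b := by
  rw [WithTop.coe_lt_coe]; exact Subtype.coe_lt_coe
lemma o_le_o {a b : Ord1} : (a.1 : WithTop Ordinal) ≤ (b.1 : WithTop Ordinal) ↔ a ≤ b := by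
  rw [WithTop.coe_le_coe]; exact Subtype.coe_le_coe

lemma Ord1.lt_succ (a : Ord1) : a < a.succ := by
  rw [← Subtype.coe_lt_coe]
  show a.1 < a.1 + 1
  rw [Ordinal.add_one_eq_succ]
  exact Order.lt_succ _

/-- the transfer relation used in the monotonicity proof -/
def ROK (α : Ord1) (v w : TV) : Prop :=
  (ordOf v < (α.1 : WithTop Ordinal) → v = w) ∧
  (ordOf w < (α.1 : WithTop Ordinal) → v = w) ∧
  (v = TV.T α → w = TV.T α) ∧
  (w = TV.F α → v = TV.F α)

lemma ROK_refl (α : Ord1) (v : TV) : ROK α v v :=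
  ⟨fun _ => rfl, fun _ => rfl, id, id⟩

lemma ROK_neg {α : Ord1} {v w : TV} (h : ROK α v w) : ROK α (negv v) (negv w) := by
  obtain ⟨h1, h2, _h3, _h4⟩ := h
  refine ⟨?_, ?_, ?_, ?_⟩
  · intro ho
    rcases tv_cases v with ⟨a, rfl⟩ | rfl | ⟨a, rfl⟩
    · rw [negv_F, ordOf_T] at ho
      rw [h1 (by rw [ordOf_F]; exact lt_trans (o_lt_o.2 (Ord1.lt_succ a)) ho)]
    · rw [negv_Z, ordOf_Z] at ho; exact absurd ho not_top_lt
    · rw [negv_T, ordOf_F] at ho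
      rw [h1 (by rw [ordOf_T]; exact lt_trans (o_lt_o.2 (Ord1.lt_succ a)) ho)]
  · intro ho
    rcases tv_cases w with ⟨a, rfl⟩ | rfl | ⟨a, rfl⟩
    · rw [negv_F, ordOf_T] at ho
      rw [h2 (by rw [ordOf_F]; exact lt_trans (o_lt_o.2 (Ord1.lt_succ a)) ho)]
    · rw [negv_Z, ordOf_Z] at ho; exact absurd ho not_top_lt
    · rw [negv_T, ordOf_F] at ho
      rw [h2 (by rw [ordOf_T]; exact lt_trans (o_lt_o.2 (Ord1.lt_succ a)) ho)]
  · intro hT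
    rcases tv_cases v with ⟨a, rfl⟩ | rfl | ⟨a, rfl⟩
    · rw [negv_F] at hT
      have ha : a < α := by
        have := T_inj hT; rw [← this]; exact Ord1.lt_succ a
      rw [← h1 (by rw [ordOf_F]; exact o_lt_o.2 ha), negv_F, hT]
    · rw [negv_Z] at hT; exact absurd hT Z_ne_T
    · rw [negv_T] at hT; exact absurd hT F_ne_T
  · intro hF
    rcases tv_cases w with ⟨a, rfl⟩ | rfl | ⟨a, rfl⟩
    · rw [negv_F] at hF; exact absurd hF T_ne_F
    · rw [negv_Z] at hF; exact absurd hF Z_ne_F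
    · rw [negv_T] at hF
      have ha : a < α := by
        have := F_inj hF; rw [← this]; exact Ord1.lt_succ a
      rw [h2 (by rw [ordOf_T]; exact o_lt_o.2 ha), negv_T, hF]

lemma tv_min_choice (x y : TV) : min x y = x ∨ min x y = y := by
  rcases le_total x y with h | h
  · exact Or.inl (inf_eq_left.2 h)
  · exact Or.inr (inf_eq_right.2 h)

lemma min_transfer {α : Ord1} {x x' y y' : TV}
    (hx1 : ordOf x < (α.1 : WithTop Ordinal) → x = x')
    (hy1 : ordOf y < (α.1 : WithTop Ordinal) → y = y')
    (hy2 : ordOf y' < (α.1 : WithTop Ordinal) → y = y')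
    (hxy : x ≤ y) (h : ordOf x < (α.1 : WithTop Ordinal)) : min x' y' = x := by
  have hxx' := hx1 h
  rcases tv_cases x with ⟨a, hxF⟩ | hxZ | ⟨a, hxT⟩
  · rw [← hxx']
    apply inf_eq_left.2
    by_contra hlt
    push_neg at hlt
    rw [hxF] at hlt
    obtain ⟨b, hb, hyb⟩ := lt_F hlt
    rw [hxF, ordOf_F] at h
    have hby : y = y' := hy2 (by rw [hyb, ordOf_F]; exact lt_trans (o_lt_o.2 hb) h)
    have : x ≤ TV.F b := by rw [hby, hyb] at hxy; exact hxy
    rw [hxF] at this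
    exact absurd (F_le_F.1 this) (not_le.2 hb)
  · rw [hxZ, ordOf_Z] at h; exact absurd h not_top_lt
  · rw [hxT] at hxy
    obtain ⟨b, hb, hyb⟩ := T_le hxy
    rw [hxT, ordOf_T] at h
    have hby : y = y' := hy1 (by rw [hyb, ordOf_T]; exact lt_of_le_of_lt (o_le_o.2 hb) h)
    rw [← hxx', ← hby]
    exact inf_eq_left.2 (by rw [hxT]; exact hxy)

lemma T_le_transfer {α : Ord1} {x x' : TV}
    (hx1 : ordOf x < (α.1 : WithTop Ordinal) → x = x')
    (hx3 : x = TV.T α → x' = TV.T α)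
    (h : TV.T α ≤ x) : TV.T α ≤ x' := by
  obtain ⟨b, hb, hxb⟩ := T_le h
  rcases eq_or_lt_of_le hb with rfl | hlt
  · rw [hx3 hxb]
  · rw [← hx1 (by rw [hxb, ordOf_T]; exact o_lt_o.2 hlt)]
    exact h

lemma ROK_min {α : Ord1} {x x' y y' : TV}
    (hx : ROK α x x') (hy : ROK α y y') : ROK α (min x y) (min x' y') := by
  obtain ⟨hx1, hx2, hx3, hx4⟩ := hx
  obtain ⟨hy1, hy2, hy3, hy4⟩ := hy
  refine ⟨?_, ?_, ?_, ?_⟩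
  · intro h
    rcases le_total x y with hxy | hyx
    · rw [inf_eq_left.2 hxy] at h ⊢
      exact (min_transfer hx1 hy1 hy2 hxy h).symm
    · rw [inf_eq_right.2 hyx] at h ⊢
      rw [inf_comm x' y']
      exact (min_transfer hy1 hx1 hx2 hyx h).symm
  · intro h
    rcases le_total x' y' with hxy | hyx
    · rw [inf_eq_left.2 hxy] at h ⊢
      exact min_transfer (fun hh => (hx2 hh).symm) (fun hh => (hy2 hh).symm)
        (fun hh => (hy1 hh).symm) hxy h
    · rw [inf_eq_right.2 hyx] at h ⊢
      rw [inf_comm x y]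
      exact min_transfer (fun hh => (hy2 hh).symm) (fun hh => (hx2 hh).symm)
        (fun hh => (hx1 hh).symm) hyx h
  · intro h
    have hTx : TV.T α ≤ x := by rw [← h]; exact inf_le_left
    have hTy : TV.T α ≤ y := by rw [← h]; exact inf_le_right
    have hx' := T_le_transfer hx1 hx3 hTx
    have hy' := T_le_transfer hy1 hy3 hTy
    refine le_antisymm ?_ (le_inf hx' hy')
    rcases tv_min_choice x y with hc | hc
    · rw [hc] at h
      exact inf_le_left.trans (le_of_eq (hx3 h))
    · rw [hc] at h
      exact inf_le_right.trans (le_of_eq (hy3 h))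
  · intro h
    rcases tv_min_choice x' y' with hc | hc
    · have hxF : x = TV.F α := hx4 (hc.symm.trans h)
      have hyge : TV.F α ≤ y := by
        by_contra hlt
        push_neg at hlt
        obtain ⟨b, hb, hyb⟩ := lt_F hlt
        have hyy : y = y' := hy1 (by rw [hyb, ordOf_F]; exact o_lt_o.2 hb)
        have : TV.F α ≤ y' := by rw [← h]; exact inf_le_right
        rw [← hyy, hyb] at this
        exact absurd (F_le_F.1 this) (not_le.2 hb)
      rw [hxF]
      exact inf_eq_left.2 hyge
    · have hyF : y = TV.F α := hy4 (hc.symm.trans h)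
      have hxge : TV.F α ≤ x := by
        by_contra hlt
        push_neg at hlt
        obtain ⟨b, hb, hxb⟩ := lt_F hlt
        have hxx : x = x' := hx1 (by rw [hxb, ordOf_F]; exact o_lt_o.2 hb)
        have : TV.F α ≤ x' := by rw [← h]; exact inf_le_left
        rw [← hxx, hxb] at this
        exact absurd (F_le_F.1 this) (not_le.2 hb)
      rw [hyF]
      exact inf_eq_right.2 hxge

lemma lub_eq_of_isLUB {S : Set TV} {v : TV} (h : IsLUB S v) : lub S = v := by
  have hex : ∃ w, IsLUB S w := ⟨v, h⟩
  rw [lub, dif_pos hex]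
  exact hex.choose_spec.unique h

lemma isLUB_of_lub {S : Set TV} {v : TV} (hv : lub S = v) (hZ : v ≠ TV.Z) :
    IsLUB S v := by
  by_cases hex : ∃ w, IsLUB S w
  · rw [lub, dif_pos hex] at hv
    exact hv ▸ hex.choose_spec
  · rw [lub, dif_neg hex] at hv
    exact absurd hv.symm hZ

lemma isLUB_T_mem {S : Set TV} {γ : Ord1} (h : IsLUB S (TV.T γ)) : TV.T γ ∈ S := by
  have hAne : {o : Ordinal | ∃ ho : o < ω₁, TV.T ⟨o, ho⟩ ∈ S}.Nonempty := by
    by_contra hne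
    rw [Set.not_nonempty_iff_eq_empty] at hne
    have hub : TV.Z ∈ upperBounds S := by
      intro x hx
      rcases tv_cases x with ⟨a, rfl⟩ | rfl | ⟨a, rfl⟩
      · exact le_of_lt F_lt_Z
      · exact le_refl _
      · have : a.1 ∈ {o : Ordinal | ∃ ho : o < ω₁, TV.T ⟨o, ho⟩ ∈ S} := ⟨a.2, hx⟩
        rw [hne] at this
        exact absurd this (Set.notMem_empty _)
    exact absurd (h.2 hub) not_T_le_Z
  obtain ⟨hm1, hmS⟩ := Ordinal.lt_wf.min_mem _ hAne
  set m : Ord1 := ⟨Ordinal.lt_wf.min _ hAne, hm1⟩ with hm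
  have hub : TV.T m ∈ upperBounds S := by
    intro x hx
    rcases tv_cases x with ⟨a, rfl⟩ | rfl | ⟨a, rfl⟩
    · exact le_of_lt F_lt_T
    · exact le_of_lt Z_lt_T
    · have haA : a.1 ∈ {o : Ordinal | ∃ ho : o < ω₁, TV.T ⟨o, ho⟩ ∈ S} := ⟨a.2, hx⟩
      have hnl := Ordinal.lt_wf.not_lt_min _ haA
      exact T_le_T.2 (Subtype.coe_le_coe.1 (not_lt.1 hnl))
  have h1 : m ≤ γ := T_le_T.1 (h.2 hub)
  have h2 : γ ≤ m := T_le_T.1 (h.1 hmS)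
  have hmg : m = γ := le_antisymm h1 h2
  rw [← hmg]
  exact hmS

lemma lub_transfer_lo {α : Ord1} {C : Set Clause} {f g : Clause → TV}
    (hfg : ∀ c ∈ C, (ordOf (f c) < (α.1 : WithTop Ordinal) → f c = g c) ∧
      (ordOf (g c) < (α.1 : WithTop Ordinal) → f c = g c))
    (h : ordOf (lub (f '' C)) < (α.1 : WithTop Ordinal)) :
    lub (f '' C) = lub (g '' C) := by
  have hNZ : lub (f '' C) ≠ TV.Z := by
    intro e; rw [e, ordOf_Z] at h; exact not_top_lt h
  have hL : IsLUB (f '' C) (lub (f '' C)) := isLUB_of_lub rfl hNZ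
  rcases tv_cases (lub (f '' C)) with ⟨a, ha⟩ | hz | ⟨a, ha⟩
  · rw [ha, ordOf_F] at h
    rw [ha] at hL
    have hcong : ∀ c ∈ C, f c = g c := by
      intro c hc
      have hle : f c ≤ TV.F a := hL.1 (Set.mem_image_of_mem _ hc)
      obtain ⟨b, hb, hfb⟩ := le_F hle
      exact (hfg c hc).1 (by rw [hfb, ordOf_F]; exact lt_of_le_of_lt (o_le_o.2 hb) h)
    rw [Set.image_congr hcong]
  · rw [hz, ordOf_Z] at h; exact absurd h not_top_lt
  · rw [ha, ordOf_T] at h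
    rw [ha] at hL
    obtain ⟨c₀, hc₀, hfc₀⟩ := isLUB_T_mem hL
    have hga : g c₀ = TV.T a := by
      rw [← (hfg c₀ hc₀).1 (by rw [hfc₀, ordOf_T]; exact h), hfc₀]
    have hub : TV.T a ∈ upperBounds (g '' C) := by
      rintro _ ⟨c, hc, rfl⟩
      by_contra hlt
      push_neg at hlt
      obtain ⟨b, hb, hgb⟩ := T_lt hlt
      have hfgc : f c = g c :=
        (hfg c hc).2 (by rw [hgb, ordOf_T]; exact lt_trans (o_lt_o.2 hb) h)
      have hfle : f c ≤ TV.T a := hL.1 (Set.mem_image_of_mem _ hc)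
      rw [hfgc] at hfle
      exact absurd (lt_of_le_of_lt hfle hlt) (lt_irrefl _)
    have : IsLUB (g '' C) (TV.T a) :=
      ⟨hub, fun w hw => hw ⟨c₀, hc₀, hga⟩⟩
    rw [ha, lub_eq_of_isLUB this]

lemma ROK_lub {α : Ord1} {C : Set Clause} {f g : Clause → TV}
    (hfg : ∀ c ∈ C, ROK α (f c) (g c)) :
    ROK α (lub (f '' C)) (lub (g '' C)) := by
  refine ⟨?_, ?_, ?_, ?_⟩
  · exact fun h => lub_transfer_lo (fun c hc => ⟨(hfg c hc).1, (hfg c hc).2.1⟩) h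
  · intro h
    exact (lub_transfer_lo (f := g) (g := f)
      (fun c hc => ⟨fun hh => ((hfg c hc).2.1 hh).symm,
        fun hh => ((hfg c hc).1 hh).symm⟩) h).symm
  · intro h
    have hL : IsLUB (f '' C) (TV.T α) := isLUB_of_lub h T_ne_Z
    obtain ⟨c₀, hc₀, hfc₀⟩ := isLUB_T_mem hL
    have hga : g c₀ = TV.T α := (hfg c₀ hc₀).2.2.1 hfc₀
    have hub : TV.T α ∈ upperBounds (g '' C) := by
      rintro _ ⟨c, hc, rfl⟩
      by_contra hlt
      push_neg at hlt
      obtain ⟨b, hb, hgb⟩ := T_lt hlt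
      have hfgc : f c = g c :=
        (hfg c hc).2.1 (by rw [hgb, ordOf_T]; exact o_lt_o.2 hb)
      have hfle : f c ≤ TV.T α := hL.1 (Set.mem_image_of_mem _ hc)
      rw [hfgc] at hfle
      exact absurd (lt_of_le_of_lt hfle hlt) (lt_irrefl _)
    exact lub_eq_of_isLUB ⟨hub, fun w hw => hw ⟨c₀, hc₀, hga⟩⟩
  · intro h
    have hL : IsLUB (g '' C) (TV.F α) := isLUB_of_lub h F_ne_Z
    by_cases hin : TV.F α ∈ g '' C
    · obtain ⟨c₀, hc₀, hgc₀⟩ := hin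
      have hfa : f c₀ = TV.F α := (hfg c₀ hc₀).2.2.2 hgc₀
      have hub : TV.F α ∈ upperBounds (f '' C) := by
        rintro _ ⟨c, hc, rfl⟩
        have hgle : g c ≤ TV.F α := hL.1 (Set.mem_image_of_mem _ hc)
        obtain ⟨b, hb, hgb⟩ := le_F hgle
        rcases eq_or_lt_of_le hb with rfl | hblt
        · rw [(hfg c hc).2.2.2 hgb]
        · rw [(hfg c hc).2.1 (by rw [hgb, ordOf_F]; exact o_lt_o.2 hblt), hgb]
          exact F_le_F.2 hb
      exact lub_eq_of_isLUB ⟨hub, fun w hw => hw ⟨c₀, hc₀, hfa⟩⟩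
    · have hcong : ∀ c ∈ C, f c = g c := by
        intro c hc
        have hgle : g c ≤ TV.F α := hL.1 (Set.mem_image_of_mem _ hc)
        obtain ⟨b, hb, hgb⟩ := le_F hgle
        rcases eq_or_lt_of_le hb with rfl | hblt
        · exact absurd ⟨c, hc, hgb⟩ hin
        · exact (hfg c hc).2.1 (by rw [hgb, ordOf_F]; exact o_lt_o.2 hblt)
      rw [Set.image_congr hcong, h]

lemma evalLit_ROK {α : Ord1} {I J : Interp} (h : ∀ n, ROK α (I n) (J n)) (l : Lit) :
    ROK α (evalLit I l) (evalLit J l) := by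
  cases l with
  | pos n => exact h n
  | neg n => exact ROK_neg (h n)
  | tt => exact ROK_refl α _
  | ff => exact ROK_refl α _

lemma evalBody_ROK {α : Ord1} {I J : Interp} (h : ∀ n, ROK α (I n) (J n)) (b : List Lit) :
    ROK α (evalBody I b) (evalBody J b) := by
  induction b with
  | nil => exact ROK_refl α _
  | cons l b ih =>
    show ROK α (min (evalLit I l) (evalBody I b)) (min (evalLit J l) (evalBody J b))
    exact ROK_min (evalLit_ROK h l) ih

lemma TP_set_eq (P : Program) (I : Interp) (p : ℕ) :
    {v | ∃ c ∈ P, c.head = p ∧ evalBody I c.body = v} =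
      (fun c => evalBody I c.body) '' {c | c ∈ P ∧ c.head = p} := by
  ext v
  constructor
  · rintro ⟨c, hc, hh, he⟩; exact ⟨c, ⟨hc, hh⟩, he⟩
  · rintro ⟨c, ⟨hc, hh⟩, he⟩; exact ⟨c, hc, hh, he⟩

lemma TP_ROK {P : Program} {α : Ord1} {I J : Interp}
    (h : ∀ n, ROK α (I n) (J n)) (p : ℕ) : ROK α (TP P I p) (TP P J p) := by
  show ROK α (lub _) (lub _)
  rw [TP_set_eq P I p, TP_set_eq P J p]
  exact ROK_lub (fun c _ => evalBody_ROK h c.body)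

lemma eqA_symm {α : Ord1} {I J : Interp} (h : eqA α I J) : eqA α J I :=
  fun β hβ => ⟨((h β hβ).1).symm, ((h β hβ).2).symm⟩

lemma eqA_ROK {α : Ord1} {I J : Interp} (h : eqA α I J) (n : ℕ) : ROK α (I n) (J n) := by
  refine ⟨?_, ?_, ?_, ?_⟩
  · intro ho
    rcases tv_cases (I n) with ⟨a, ha⟩ | hz | ⟨a, ha⟩
    · rw [ha, ordOf_F] at ho
      have hiff := Set.ext_iff.1 (h a (le_of_lt (o_lt_o.1 ho))).2 n
      simp only [level, Set.mem_setOf_eq] at hiff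
      exact ha.trans (hiff.1 ha).symm
    · rw [hz, ordOf_Z] at ho; exact absurd ho not_top_lt
    · rw [ha, ordOf_T] at ho
      have hiff := Set.ext_iff.1 (h a (le_of_lt (o_lt_o.1 ho))).1 n
      simp only [level, Set.mem_setOf_eq] at hiff
      exact ha.trans (hiff.1 ha).symm
  · intro ho
    rcases tv_cases (J n) with ⟨a, ha⟩ | hz | ⟨a, ha⟩
    · rw [ha, ordOf_F] at ho
      have hiff := Set.ext_iff.1 (h a (le_of_lt (o_lt_o.1 ho))).2 n
      simp only [level, Set.mem_setOf_eq] at hiff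
      exact (hiff.2 ha).trans ha.symm
    · rw [hz, ordOf_Z] at ho; exact absurd ho not_top_lt
    · rw [ha, ordOf_T] at ho
      have hiff := Set.ext_iff.1 (h a (le_of_lt (o_lt_o.1 ho))).1 n
      simp only [level, Set.mem_setOf_eq] at hiff
      exact (hiff.2 ha).trans ha.symm
  · intro hT
    have hiff := Set.ext_iff.1 (h α le_rfl).1 n
    simp only [level, Set.mem_setOf_eq] at hiff
    exact hiff.1 hT
  · intro hF
    have hiff := Set.ext_iff.1 (h α le_rfl).2 n
    simp only [level, Set.mem_setOf_eq] at hiff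
    exact hiff.2 hF

lemma sqltA_ROK {α : Ord1} {I J : Interp} (h : sqltA α I J) (n : ℕ) :
    ROK α (I n) (J n) := by
  obtain ⟨heq, hd⟩ := h
  refine ⟨?_, ?_, ?_, ?_⟩
  · intro ho
    rcases tv_cases (I n) with ⟨a, ha⟩ | hz | ⟨a, ha⟩
    · rw [ha, ordOf_F] at ho
      have hiff := Set.ext_iff.1 ((heq a (o_lt_o.1 ho)) a le_rfl).2 n
      simp only [level, Set.mem_setOf_eq] at hiff
      exact ha.trans (hiff.1 ha).symm
    · rw [hz, ordOf_Z] at ho; exact absurd ho not_top_lt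
    · rw [ha, ordOf_T] at ho
      have hiff := Set.ext_iff.1 ((heq a (o_lt_o.1 ho)) a le_rfl).1 n
      simp only [level, Set.mem_setOf_eq] at hiff
      exact ha.trans (hiff.1 ha).symm
  · intro ho
    rcases tv_cases (J n) with ⟨a, ha⟩ | hz | ⟨a, ha⟩
    · rw [ha, ordOf_F] at ho
      have hiff := Set.ext_iff.1 ((heq a (o_lt_o.1 ho)) a le_rfl).2 n
      simp only [level, Set.mem_setOf_eq] at hiff
      exact (hiff.2 ha).trans ha.symm
    · rw [hz, ordOf_Z] at ho; exact absurd ho not_top_lt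
    · rw [ha, ordOf_T] at ho
      have hiff := Set.ext_iff.1 ((heq a (o_lt_o.1 ho)) a le_rfl).1 n
      simp only [level, Set.mem_setOf_eq] at hiff
      exact (hiff.2 ha).trans ha.symm
  · intro hT
    rcases hd with ⟨h1, _⟩ | ⟨h1, _⟩
    · exact h1.1 hT
    · exact h1 hT
  · intro hF
    rcases hd with ⟨_, h2⟩ | ⟨_, h2⟩
    · exact h2 hF
    · exact h2.1 hF

lemma ROK_levels {α : Ord1} {A B : Interp} (h : ∀ p, ROK α (A p) (B p)) :
    (∀ β, β < α → eqA β A B) ∧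
      level A (TV.T α) ⊆ level B (TV.T α) ∧ level B (TV.F α) ⊆ level A (TV.F α) := by
  refine ⟨?_, ?_, ?_⟩
  · intro β hβ γ hγ
    have hγα : (γ.1 : WithTop Ordinal) < (α.1 : WithTop Ordinal) :=
      o_lt_o.2 (lt_of_le_of_lt hγ hβ)
    constructor
    · ext p
      simp only [level, Set.mem_setOf_eq]
      constructor
      · intro hp
        rw [← (h p).1 (by rw [hp, ordOf_T]; exact hγα)]
        exact hp
      · intro hp
        rw [(h p).2.1 (by rw [hp, ordOf_T]; exact hγα)]
        exact hp
    · ext p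
      simp only [level, Set.mem_setOf_eq]
      constructor
      · intro hp
        rw [← (h p).1 (by rw [hp, ordOf_F]; exact hγα)]
        exact hp
      · intro hp
        rw [(h p).2.1 (by rw [hp, ordOf_F]; exact hγα)]
        exact hp
  · intro p hp
    exact (h p).2.2.1 hp
  · intro p hp
    exact (h p).2.2.2 hp

end AlphaMono

/-- `T_P` is `α`-monotonic for every countable ordinal `α`. -/
theorem TP_alpha_monotonic (P : Program) (α : Ord1) (I J : Interp)
    (h : sqleA α I J) : sqleA α (TP P I) (TP P J) := by
  rcases h with heq | hlt
  · left
    have C1 := ROK_levels (fun p => TP_ROK (P := P) (eqA_ROK heq) p)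
    have C2 := ROK_levels (fun p => TP_ROK (P := P) (eqA_ROK (eqA_symm heq)) p)
    intro β hβ
    rcases lt_or_eq_of_le hβ with hblt | rfl
    · exact C1.1 β hblt β le_rfl
    · exact ⟨Set.Subset.antisymm C1.2.1 C2.2.1, Set.Subset.antisymm C2.2.2 C1.2.2⟩
  · obtain ⟨h1, hT, hF⟩ := ROK_levels (fun p => TP_ROK (P := P) (sqltA_ROK hlt) p)
    by_cases hTe : level (TP P I) (TV.T α) = level (TP P J) (TV.T α)
    · by_cases hFe : level (TP P I) (TV.F α) = level (TP P J) (TV.F α)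
      · left
        intro β hβ
        rcases lt_or_eq_of_le hβ with hblt | rfl
        · exact h1 β hblt β le_rfl
        · exact ⟨hTe, hFe⟩
      · right
        exact ⟨h1, Or.inr ⟨hTe.subset, hF.ssubset_of_ne (fun e => hFe e.symm)⟩⟩
    · right
      exact ⟨h1, Or.inl ⟨hT.ssubset_of_ne hTe, hF⟩⟩

end IVS
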